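/- For a reversible stationary Markov chain, if Qg = -g for g ∈ L²₀(π), then X_n = -X_{n-1} almost surely (where X_k = g(W_k)) and hence S_n = (1/2)[1+(-1)^{n-1}]X_1 almost surely. -/

import Mathlib

open MeasureTheory Filter Finset

/-- The alternating sum `∑_{k=1}^n (-1)^(k-1) = (1/2)(1 + (-1)^(n-1))` for `n ≥ 1`. -/
lemma alt_sum_formula (n : ℕ) (hn : 1 ≤ n) :
    (∑ k ∈ Finset.Icc 1 n, ((-1 : ℝ)) ^ (k - 1))
      = (1 / 2) * (1 + (-1 : ℝ) ^ (n - 1)) := by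
  induction n with
  | zero => omega
  | succ m ih =>
    rcases Nat.eq_or_lt_of_le hn with h | h
    · simp [← h]; norm_num
    · have hm : 1 ≤ m := by omega
      obtain ⟨j, rfl⟩ : ∃ j, m = j + 1 := ⟨m - 1, by omega⟩
      rw [Finset.sum_Icc_succ_top (by omega : 1 ≤ j + 1 + 1), ih hm]
      simp only [Nat.add_sub_cancel, pow_succ]
      ring

/-- for a stationary (reversible) Markov chain with transition
operator `Q` and marginal `π`, if `Q g = -g` (in `L²(π)`), then `X_n = -X_{n-1}`
almost surely (where `X_k = g (W k)`), and hence
`S_n = (1/2)(1 + (-1)^{n-1}) X_1` almost surely. -/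
theorem Qg_eq_neg_g_implies_alternating
    {𝓦 : Type*} [MeasurableSpace 𝓦] (π : Measure 𝓦) [IsProbabilityMeasure π]
    {Ω : Type*} [MeasurableSpace Ω] (P : Measure Ω) [IsProbabilityMeasure P]
    (W : ℕ → Ω → 𝓦) (hW : ∀ k, Measurable (W k))
    (hstat : ∀ k, Measure.map (W k) P = π)
    (g : 𝓦 → ℝ) (hgm : Measurable g) (hg : MemLp g 2 π) (hg0 : ∫ w, g w ∂π = 0)
    (Qg : 𝓦 → ℝ)
    (hcov : ∀ k : ℕ, ∫ ω, g (W k ω) * g (W (k + 1) ω) ∂P = ∫ w, g w * Qg w ∂π)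
    (hQg : ∀ᵐ w ∂π, Qg w = - g w) :
    (∀ n : ℕ, 1 ≤ n → ∀ᵐ ω ∂P, g (W n ω) = - g (W (n - 1) ω)) ∧
    (∀ n : ℕ, 1 ≤ n → ∀ᵐ ω ∂P,
      ∑ k ∈ Finset.Icc 1 n, g (W k ω)
        = (1 / 2) * (1 + (-1 : ℝ) ^ (n - 1)) * g (W 1 ω)) := by
  -- each g ∘ W k is in L²(P)
  have hgk : ∀ k, MemLp (fun ω => g (W k ω)) 2 P := by
    intro k
    have : MemLp g 2 (Measure.map (W k) P) := by rw [hstat k]; exact hg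
    exact (memLp_map_measure_iff hgm.aestronglyMeasurable.aemeasurable.aestronglyMeasurable
      (hW k).aemeasurable).mp this
  -- ∫ (g (W k))² dP = ∫ g² dπ
  have hsq : ∀ k, ∫ ω, (g (W k ω)) ^ 2 ∂P = ∫ w, (g w) ^ 2 ∂π := by
    intro k
    rw [← hstat k, integral_map (hW k).aemeasurable
      ((hgm.pow_const 2).aestronglyMeasurable)]
  -- ∫ g·Qg dπ = -∫ g² dπ
  have hQint : ∫ w, g w * Qg w ∂π = - ∫ w, (g w) ^ 2 ∂π := by
    rw [← integral_neg]
    apply integral_congr_ae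
    filter_upwards [hQg] with w hw
    rw [hw]; ring
  -- key: g (W (k+1)) = - g (W k) a.e.
  have key : ∀ k : ℕ, ∀ᵐ ω ∂P, g (W (k + 1) ω) = - g (W k ω) := by
    intro k
    have ha := hgk k
    have hb := hgk (k + 1)
    have hab : MemLp (fun ω => g (W k ω) + g (W (k + 1) ω)) 2 P := ha.add hb
    have hsab : Integrable (fun ω => (g (W k ω) + g (W (k + 1) ω)) ^ 2) P :=
      hab.integrable_sq
    have hsa : Integrable (fun ω => (g (W k ω)) ^ 2) P := ha.integrable_sq
    have hsb : Integrable (fun ω => (g (W (k + 1) ω)) ^ 2) P := hb.integrable_sq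
    have hmul : Integrable (fun ω => g (W k ω) * g (W (k + 1) ω)) P := by
      have : (fun ω => g (W k ω) * g (W (k + 1) ω)) =
          (fun ω => (((g (W k ω) + g (W (k + 1) ω)) ^ 2 - (g (W k ω)) ^ 2)
            - (g (W (k + 1) ω)) ^ 2) / 2) := by
        funext ω; ring
      rw [this]
      exact ((hsab.sub hsa).sub hsb).div_const 2
    -- the integral of (a+b)² is zero
    have hzero : ∫ ω, (g (W k ω) + g (W (k + 1) ω)) ^ 2 ∂P = 0 := by
      have expand : (fun ω => (g (W k ω) + g (W (k + 1) ω)) ^ 2) =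
          (fun ω => ((g (W k ω)) ^ 2 + (g (W (k + 1) ω)) ^ 2)
            + 2 * (g (W k ω) * g (W (k + 1) ω))) := by
        funext ω; ring
      have hsum : Integrable (fun ω => (g (W k ω)) ^ 2 + (g (W (k + 1) ω)) ^ 2) P :=
        hsa.add hsb
      have hc2 : Integrable (fun ω => 2 * (g (W k ω) * g (W (k + 1) ω))) P :=
        hmul.const_mul 2
      rw [expand, integral_add hsum hc2,
        integral_add hsa hsb, MeasureTheory.integral_const_mul, hcov k, hQint, hsq k, hsq (k + 1)]
      ring
    have hae : (fun ω => (g (W k ω) + g (W (k + 1) ω)) ^ 2) =ᵐ[P] 0 := by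
      rw [← integral_eq_zero_iff_of_nonneg (fun ω => sq_nonneg _) hsab]
      exact hzero
    filter_upwards [hae] with ω hω
    have : (g (W k ω) + g (W (k + 1) ω)) ^ 2 = 0 := hω
    have := pow_eq_zero_iff (n := 2) (by norm_num) |>.mp this
    linarith
  constructor
  · intro n hn
    have := key (n - 1)
    have hn1 : n - 1 + 1 = n := by omega
    rwa [hn1] at this
  · intro n hn
    have hall : ∀ᵐ ω ∂P, ∀ k : ℕ, g (W (k + 1) ω) = - g (W k ω) :=
      ae_all_iff.mpr key
    filter_upwards [hall] with ω hω
    have hpow : ∀ k : ℕ, 1 ≤ k → g (W k ω) = (-1 : ℝ) ^ (k - 1) * g (W 1 ω) := by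
      intro k hk
      induction k with
      | zero => omega
      | succ m ih =>
        rcases Nat.eq_or_lt_of_le hk with h | h
        · simp [← h]
        · have hm : 1 ≤ m := by omega
          obtain ⟨j, rfl⟩ : ∃ j, m = j + 1 := ⟨m - 1, by omega⟩
          rw [hω (j + 1), ih hm]
          simp only [Nat.add_sub_cancel, pow_succ]
          ring
    calc ∑ k ∈ Finset.Icc 1 n, g (W k ω)
        = ∑ k ∈ Finset.Icc 1 n, (-1 : ℝ) ^ (k - 1) * g (W 1 ω) := by
          apply Finset.sum_congr rfl
          intro k hk
          exact hpow k (Finset.mem_Icc.mp hk).1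
      _ = (∑ k ∈ Finset.Icc 1 n, (-1 : ℝ) ^ (k - 1)) * g (W 1 ω) := by
          rw [Finset.sum_mul]
      _ = (1 / 2) * (1 + (-1 : ℝ) ^ (n - 1)) * g (W 1 ω) := by
          rw [alt_sum_formula n hn]
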